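/- Let $\Sigma$ have the spectral form $\Sigma = \sum_{i=1}^m \lambda_i P_{:,i} P_{:,i}^\top + \lambda_c \sum_{j=1}^{d-m} Q_{:,j} Q_{:,j}^\top$ with $\{P_{:,1}, \dots, P_{:,m}, Q_{:,1}, \dots, Q_{:,d-m}\}$ an orthonormal basis of $\mathbb{R}^d$, all $\lambda_i, \lambda_c > 0$. For $k > 1$ and $\epsilon \in \mathbb{R}$, define the rotated eigenvectors $\tilde P_{:,1} = -\sin\epsilon \cdot P_{:,k} + \cos\epsilon \cdot P_{:,1}$ and $\tilde P_{:,k} = \cos\epsilon \cdot P_{:,k} + \sin\epsilon \cdot P_{:,1}$, and the perturbed matrix $\tilde\Sigma_{(k)}$ obtained from $\Sigma$ by replacing $P_{:,1}$ with $\tilde P_{:,1}$ and $P_{:,k}$ with $\tilde P_{:,k}$. Then for any $z \in \mathbb{R}^d$, $\|\tilde\Sigma_{(k)}^{-1} z - \Sigma^{-1} z\|^2 = \left(\frac{1}{\lambda_1} - \frac{1}{\lambda_k}\right)^2 \sin^2\epsilon \left(\langle z, P_{:,k}\rangle^2 + \langle z, P_{:,1}\rangle^2\right)$. -/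
import Mathlib

open Matrix

section helpers
variable {d : ℕ}

lemma my_sum_mulVec {ι : Type*} (s : Finset ι) (A : ι → Matrix (Fin d) (Fin d) ℝ) (v : Fin d → ℝ) :
    (∑ i ∈ s, A i).mulVec v = ∑ i ∈ s, (A i).mulVec v := by
  funext j
  simp only [Matrix.mulVec, dotProduct, Finset.sum_apply, Matrix.sum_apply, Finset.sum_mul]
  exact Finset.sum_comm

lemma my_vecMulVec_mulVec (u w x : Fin d → ℝ) :
    (vecMulVec u w).mulVec x = (w ⬝ᵥ x) • u := by
  funext i
  simp only [Matrix.mulVec, dotProduct, vecMulVec_apply, Pi.smul_apply, smul_eq_mul,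
    Finset.sum_mul]
  exact Finset.sum_congr rfl fun j _ => by ring

lemma my_dotProduct_sum {ι : Type*} (s : Finset ι) (u : Fin d → ℝ) (f : ι → Fin d → ℝ) :
    u ⬝ᵥ (∑ i ∈ s, f i) = ∑ i ∈ s, u ⬝ᵥ f i := by
  simp only [dotProduct, Finset.sum_apply, Finset.mul_sum]
  exact Finset.sum_comm

lemma my_mulVec_spec {m dm : ℕ} (R : Fin m → Fin d → ℝ) (Q : Fin dm → Fin d → ℝ)
    (ν : Fin m → ℝ) (t : ℝ) (v : Fin d → ℝ) :
    ((∑ i, ν i • vecMulVec (R i) (R i)) + t • ∑ j, vecMulVec (Q j) (Q j)).mulVec v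
      = ∑ i, (ν i * (R i ⬝ᵥ v)) • R i + ∑ j, (t * (Q j ⬝ᵥ v)) • Q j := by
  rw [add_mulVec, smul_mulVec, my_sum_mulVec, my_sum_mulVec]
  congr 1
  · exact Finset.sum_congr rfl fun i _ => by
      rw [smul_mulVec, my_vecMulVec_mulVec, smul_smul]
  · rw [Finset.smul_sum]
    exact Finset.sum_congr rfl fun j _ => by rw [my_vecMulVec_mulVec, smul_smul]

lemma my_inv_apply {m dm : ℕ} (R : Fin m → Fin d → ℝ) (Q : Fin dm → Fin d → ℝ)
    (hRR : ∀ i j, R i ⬝ᵥ R j = if i = j then 1 else 0)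
    (hQQ : ∀ i j, Q i ⬝ᵥ Q j = if i = j then 1 else 0)
    (hRQ : ∀ i j, R i ⬝ᵥ Q j = 0)
    (hbasis : ∀ w : Fin d → ℝ, (∑ i, (w ⬝ᵥ R i) • R i) + ∑ j, (w ⬝ᵥ Q j) • Q j = w)
    (μ : Fin m → ℝ) (hμ : ∀ i, μ i ≠ 0) (lc : ℝ) (hlc : lc ≠ 0) (z : Fin d → ℝ) :
    ((∑ i, μ i • vecMulVec (R i) (R i)) + lc • ∑ j, vecMulVec (Q j) (Q j))⁻¹.mulVec z
      = ∑ i, ((μ i)⁻¹ * (R i ⬝ᵥ z)) • R i + ∑ j, (lc⁻¹ * (Q j ⬝ᵥ z)) • Q j := by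
  have hQR : ∀ i j, Q j ⬝ᵥ R i = 0 := fun i j => by
    rw [dotProduct_comm]; exact hRQ i j
  have hRdot : ∀ (i : Fin m) (cR : Fin m → ℝ) (cQ : Fin dm → ℝ),
      R i ⬝ᵥ ((∑ l, cR l • R l) + ∑ j, cQ j • Q j) = cR i := by
    intro i cR cQ
    rw [dotProduct_add, my_dotProduct_sum, my_dotProduct_sum]
    simp [dotProduct_smul, hRR, hRQ, mul_ite, Finset.sum_ite_eq]
  have hQdot : ∀ (j : Fin dm) (cR : Fin m → ℝ) (cQ : Fin dm → ℝ),
      Q j ⬝ᵥ ((∑ l, cR l • R l) + ∑ j', cQ j' • Q j') = cQ j := by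
    intro j cR cQ
    rw [dotProduct_add, my_dotProduct_sum, my_dotProduct_sum]
    simp [dotProduct_smul, hQQ, hQR, mul_ite, Finset.sum_ite_eq]
  set M := (∑ i, μ i • vecMulVec (R i) (R i)) + lc • ∑ j, vecMulVec (Q j) (Q j) with hM
  set N := (∑ i, (μ i)⁻¹ • vecMulVec (R i) (R i)) + lc⁻¹ • ∑ j, vecMulVec (Q j) (Q j) with hN
  have key : ∀ v, M.mulVec (N.mulVec v) = v := by
    intro v
    rw [hM, hN, my_mulVec_spec, my_mulVec_spec]
    have e1 : ∀ i : Fin m,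
        (μ i * (R i ⬝ᵥ ((∑ l, ((μ l)⁻¹ * (R l ⬝ᵥ v)) • R l) + ∑ j, (lc⁻¹ * (Q j ⬝ᵥ v)) • Q j))) • R i
          = (v ⬝ᵥ R i) • R i := by
      intro i
      rw [hRdot i, ← mul_assoc, mul_inv_cancel₀ (hμ i), one_mul, dotProduct_comm]
    have e2 : ∀ j : Fin dm,
        (lc * (Q j ⬝ᵥ ((∑ l, ((μ l)⁻¹ * (R l ⬝ᵥ v)) • R l) + ∑ j', (lc⁻¹ * (Q j' ⬝ᵥ v)) • Q j'))) • Q j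
          = (v ⬝ᵥ Q j) • Q j := by
      intro j
      rw [hQdot j, ← mul_assoc, mul_inv_cancel₀ hlc, one_mul, dotProduct_comm]
    calc (∑ i, (μ i * (R i ⬝ᵥ ((∑ l, ((μ l)⁻¹ * (R l ⬝ᵥ v)) • R l) + ∑ j, (lc⁻¹ * (Q j ⬝ᵥ v)) • Q j))) • R i)
          + ∑ j, (lc * (Q j ⬝ᵥ ((∑ l, ((μ l)⁻¹ * (R l ⬝ᵥ v)) • R l) + ∑ j', (lc⁻¹ * (Q j' ⬝ᵥ v)) • Q j'))) • Q j
        = (∑ i, (v ⬝ᵥ R i) • R i) + ∑ j, (v ⬝ᵥ Q j) • Q j := by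
          congr 1
          · exact Finset.sum_congr rfl fun i _ => e1 i
          · exact Finset.sum_congr rfl fun j _ => e2 j
      _ = v := hbasis v
  have hMN : M * N = 1 := by
    ext i j
    have h := congrFun (key (Pi.single j 1)) i
    rw [Matrix.mulVec_mulVec] at h
    simpa [Matrix.mulVec_single, Matrix.one_apply, Pi.single_apply, eq_comm] using h
  rw [inv_eq_right_inv hMN, hN, my_mulVec_spec]

end helpers

theorem stmt_6 {d m dm : ℕ} [NeZero m]
    (P : Fin m → (Fin d → ℝ)) (Q : Fin dm → (Fin d → ℝ))
    (hPP : ∀ i j, P i ⬝ᵥ P j = if i = j then 1 else 0)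
    (hQQ : ∀ i j, Q i ⬝ᵥ Q j = if i = j then 1 else 0)
    (hPQ : ∀ i j, P i ⬝ᵥ Q j = 0)
    (hbasis : ∀ z : Fin d → ℝ,
      (∑ i, (z ⬝ᵥ P i) • P i) + (∑ j, (z ⬝ᵥ Q j) • Q j) = z)
    (lam : Fin m → ℝ) (hlam : ∀ i, 0 < lam i) (lamc : ℝ) (hlamc : 0 < lamc)
    (k : Fin m) (hk : k ≠ 0) (ε : ℝ)
    (Ptilde : Fin m → (Fin d → ℝ))
    (hPt : Ptilde = Function.update
      (Function.update P 0 ((-Real.sin ε) • P k + Real.cos ε • P 0)) k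
      (Real.cos ε • P k + Real.sin ε • P 0))
    (S St : Matrix (Fin d) (Fin d) ℝ)
    (hS : S = (∑ i, lam i • vecMulVec (P i) (P i)) +
      lamc • ∑ j, vecMulVec (Q j) (Q j))
    (hSt : St = (∑ i, lam i • vecMulVec (Ptilde i) (Ptilde i)) +
      lamc • ∑ j, vecMulVec (Q j) (Q j))
    (z : Fin d → ℝ) :
    (St⁻¹.mulVec z - S⁻¹.mulVec z) ⬝ᵥ (St⁻¹.mulVec z - S⁻¹.mulVec z) =
      (1 / lam 0 - 1 / lam k) ^ 2 * Real.sin ε ^ 2 *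
        ((z ⬝ᵥ P k) ^ 2 + (z ⬝ᵥ P 0) ^ 2) := by
  set s := Real.sin ε with hs
  set c := Real.cos ε with hc
  have pyth : s ^ 2 + c ^ 2 = 1 := Real.sin_sq_add_cos_sq ε
  have hk0 : (0 : Fin m) ≠ k := Ne.symm hk
  have hPt0 : Ptilde 0 = (-s) • P k + c • P 0 := by
    rw [hPt, Function.update_of_ne hk0, Function.update_self]
  have hPtk : Ptilde k = c • P k + s • P 0 := by
    rw [hPt, Function.update_self]
  have hPti : ∀ i, i ≠ 0 → i ≠ k → Ptilde i = P i := by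
    intro i hi0 hik
    rw [hPt, Function.update_of_ne hik, Function.update_of_ne hi0]
  -- dot product helpers
  have hd : ∀ x1 x2 y1 y2 : ℝ,
      (x1 • P k + x2 • P 0) ⬝ᵥ (y1 • P k + y2 • P 0) = x1 * y1 + x2 * y2 := by
    intro x1 x2 y1 y2
    simp only [add_dotProduct, dotProduct_add, smul_dotProduct, dotProduct_smul,
      smul_eq_mul, hPP, if_neg hk, if_neg hk0, eq_self_iff_true, if_true]
    ring
  have hdP : ∀ (x1 x2 : ℝ) (j : Fin m), j ≠ 0 → j ≠ k →
      (x1 • P k + x2 • P 0) ⬝ᵥ P j = 0 := by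
    intro x1 x2 j hj0 hjk
    simp only [add_dotProduct, smul_dotProduct, smul_eq_mul, hPP,
      if_neg (Ne.symm hjk), if_neg (Ne.symm hj0)]
    ring
  have hPd : ∀ (x1 x2 : ℝ) (j : Fin m), j ≠ 0 → j ≠ k →
      P j ⬝ᵥ (x1 • P k + x2 • P 0) = 0 := by
    intro x1 x2 j hj0 hjk
    rw [dotProduct_comm]; exact hdP x1 x2 j hj0 hjk
  have hPtPt : ∀ i j, Ptilde i ⬝ᵥ Ptilde j = if i = j then 1 else 0 := by
    intro i j
    by_cases hi0 : i = 0
    · by_cases hj0 : j = 0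
      · rw [hi0, hj0, hPt0, hd, if_pos rfl]; linear_combination pyth
      · by_cases hjk : j = k
        · rw [hi0, hjk, hPt0, hPtk, hd, if_neg hk0]; ring
        · rw [hi0, hPt0, hPti j hj0 hjk, hdP _ _ j hj0 hjk,
            if_neg (show (0 : Fin m) ≠ j from Ne.symm hj0)]
    · by_cases hik : i = k
      · by_cases hj0 : j = 0
        · rw [hik, hj0, hPtk, hPt0, hd, if_neg hk]; ring
        · by_cases hjk : j = k
          · rw [hik, hjk, hPtk, hd, if_pos rfl]; linear_combination pyth
          · rw [hik, hPtk, hPti j hj0 hjk, hdP _ _ j hj0 hjk,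
              if_neg (show k ≠ j from Ne.symm hjk)]
      · by_cases hj0 : j = 0
        · rw [hj0, hPti i hi0 hik, hPt0, hPd _ _ i hi0 hik, if_neg (hj0 ▸ hi0)]
        · by_cases hjk : j = k
          · rw [hjk, hPti i hi0 hik, hPtk, hPd _ _ i hi0 hik, if_neg (hjk ▸ hik)]
          · rw [hPti i hi0 hik, hPti j hj0 hjk]; exact hPP i j
  have hPtQ : ∀ i j, Ptilde i ⬝ᵥ Q j = 0 := by
    intro i j
    by_cases hi0 : i = 0
    · rw [hi0, hPt0]
      simp [add_dotProduct, smul_dotProduct, hPQ]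
    · by_cases hik : i = k
      · rw [hik, hPtk]
        simp [add_dotProduct, smul_dotProduct, hPQ]
      · rw [hPti i hi0 hik]; exact hPQ i j
  have hwA : ∀ w : Fin d → ℝ,
      w ⬝ᵥ ((-s) • P k + c • P 0) = -s * (w ⬝ᵥ P k) + c * (w ⬝ᵥ P 0) := by
    intro w
    simp [dotProduct_add, dotProduct_smul]
  have hwB : ∀ w : Fin d → ℝ,
      w ⬝ᵥ (c • P k + s • P 0) = c * (w ⬝ᵥ P k) + s * (w ⬝ᵥ P 0) := by
    intro w
    simp [dotProduct_add, dotProduct_smul]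
  have hbasisPt : ∀ w : Fin d → ℝ,
      (∑ i, (w ⬝ᵥ Ptilde i) • Ptilde i) + ∑ j, (w ⬝ᵥ Q j) • Q j = w := by
    intro w
    have hPsum : ∑ i, (w ⬝ᵥ Ptilde i) • Ptilde i = ∑ i, (w ⬝ᵥ P i) • P i := by
      rw [← sub_eq_zero, ← Finset.sum_sub_distrib]
      have hsub : ∑ i ∈ ({0, k} : Finset (Fin m)),
            ((w ⬝ᵥ Ptilde i) • Ptilde i - (w ⬝ᵥ P i) • P i)
          = ∑ i, ((w ⬝ᵥ Ptilde i) • Ptilde i - (w ⬝ᵥ P i) • P i) :=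
        Finset.sum_subset (Finset.subset_univ _) (fun i _ hi => by
          simp only [Finset.mem_insert, Finset.mem_singleton, not_or] at hi
          rw [hPti i hi.1 hi.2, sub_self])
      rw [← hsub, Finset.sum_pair hk0, hPt0, hPtk, hwA, hwB]
      funext x
      simp only [Pi.add_apply, Pi.sub_apply, Pi.smul_apply, Pi.neg_apply, Pi.zero_apply,
        smul_eq_mul, neg_mul]
      linear_combination (w ⬝ᵥ P k * P k x + w ⬝ᵥ P 0 * P 0 x) * pyth
    rw [hPsum]; exact hbasis w
  have hlam' : ∀ i, lam i ≠ 0 := fun i => (hlam i).ne'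
  rw [hS, hSt,
    my_inv_apply P Q hPP hQQ hPQ hbasis lam hlam' lamc hlamc.ne' z,
    my_inv_apply Ptilde Q hPtPt hQQ hPtQ hbasisPt lam hlam' lamc hlamc.ne' z]
  set L0 := (lam 0)⁻¹ with hL0
  set Lk := (lam k)⁻¹ with hLk
  set A0 := P 0 ⬝ᵥ z with hA0
  set Bk := P k ⬝ᵥ z with hBk
  have hdiff :
      ((∑ i, ((lam i)⁻¹ * (Ptilde i ⬝ᵥ z)) • Ptilde i) + ∑ j, (lamc⁻¹ * (Q j ⬝ᵥ z)) • Q j)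
        - ((∑ i, ((lam i)⁻¹ * (P i ⬝ᵥ z)) • P i) + ∑ j, (lamc⁻¹ * (Q j ⬝ᵥ z)) • Q j)
      = ((L0 - Lk) * (s ^ 2 * Bk - c * s * A0)) • P k
        + ((L0 - Lk) * (-(s ^ 2) * A0 - c * s * Bk)) • P 0 := by
    rw [add_sub_add_right_eq_sub, ← Finset.sum_sub_distrib]
    have hsub : ∑ i ∈ ({0, k} : Finset (Fin m)),
          (((lam i)⁻¹ * (Ptilde i ⬝ᵥ z)) • Ptilde i - ((lam i)⁻¹ * (P i ⬝ᵥ z)) • P i)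
        = ∑ i, (((lam i)⁻¹ * (Ptilde i ⬝ᵥ z)) • Ptilde i - ((lam i)⁻¹ * (P i ⬝ᵥ z)) • P i) :=
      Finset.sum_subset (Finset.subset_univ _) (fun i _ hi => by
        simp only [Finset.mem_insert, Finset.mem_singleton, not_or] at hi
        rw [hPti i hi.1 hi.2, sub_self])
    rw [← hsub, Finset.sum_pair hk0, hPt0, hPtk]
    have hAz : ((-s) • P k + c • P 0) ⬝ᵥ z = -s * Bk + c * A0 := by
      rw [dotProduct_comm, hwA, dotProduct_comm z (P k), dotProduct_comm z (P 0)]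
    have hBz : (c • P k + s • P 0) ⬝ᵥ z = c * Bk + s * A0 := by
      rw [dotProduct_comm, hwB, dotProduct_comm z (P k), dotProduct_comm z (P 0)]
    rw [hAz, hBz]
    funext x
    simp only [Pi.add_apply, Pi.sub_apply, Pi.smul_apply, Pi.neg_apply, smul_eq_mul, neg_mul]
    linear_combination (L0 * A0 * P 0 x + Lk * Bk * P k x) * pyth
  rw [hdiff, hd]
  rw [dotProduct_comm z (P k), dotProduct_comm z (P 0), ← hA0, ← hBk,
    one_div, one_div, ← hL0, ← hLk]
  linear_combination ((L0 - Lk) ^ 2 * s ^ 2 * (A0 ^ 2 + Bk ^ 2)) * pyth
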